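/- Bounded-buffer soundness check: if during any execution of the transformed program each per-address buffer never holds more than 2 pending writes (the bound-check assertions never fail), then the bounded-buffer transformed program and the unbounded-buffer transformed program have the same reachable states. -/
import Mathlib


/-- bounded-buffer soundness. If the error state (reached when a
push would exceed the buffer capacity 2) is unreachable in the bounded system,
then the bounded and unbounded transformed programs have the same reachable
states (all of which keep every per-address buffer at length ≤ 2). -/
theorem bounded_buffer_soundness {S : Type*}
    (step : S → S → Prop)              -- unbounded semantics
    (bufLen : S → ℕ → ℕ)               -- per-address buffer length
    (init : S)
    (ok : S → Prop)
    (hok : ∀ s, ok s ↔ ∀ ℓ, bufLen s ℓ ≤ 2)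
    (hinit : ok init)
    -- bounded semantics on Option S, with none the error state
    (stepB : Option S → Option S → Prop)
    (hstepB : ∀ x y, stepB x y ↔
      ∃ s s', x = some s ∧ step s s' ∧ ((ok s' ∧ y = some s') ∨ (¬ ok s' ∧ y = none)))
    -- the bound-check assertions never fail: the error state is unreachable
    (hnoerr : ¬ Relation.ReflTransGen stepB (some init) none) :
    (∀ s, Relation.ReflTransGen stepB (some init) (some s) ↔
      Relation.ReflTransGen step init s) ∧
    (∀ s, Relation.ReflTransGen step init s → ok s) := by
  -- forward: bounded reachability implies unbounded reachability
  have fwd : ∀ x, Relation.ReflTransGen stepB (some init) x →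
      ∀ s, x = some s → Relation.ReflTransGen step init s := by
    intro x h
    induction h with
    | refl => intro s hs; cases hs; exact Relation.ReflTransGen.refl
    | tail hab hbc ih =>
      intro s hs
      subst hs
      obtain ⟨t, t', ht, hstep, hcase⟩ := (hstepB _ _).1 hbc
      rcases hcase with ⟨_, heq⟩ | ⟨_, heq⟩
      · cases heq
        exact (ih t ht).tail hstep
      · exact absurd heq (by simp)
  -- backward: unbounded reachability implies ok and bounded reachability
  have bwd : ∀ s, Relation.ReflTransGen step init s →
      ok s ∧ Relation.ReflTransGen stepB (some init) (some s) := by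
    intro s h
    induction h with
    | refl => exact ⟨hinit, Relation.ReflTransGen.refl⟩
    | @tail b c hab hbc ih =>
      obtain ⟨hokb, hreach⟩ := ih
      by_cases hc : ok c
      · exact ⟨hc, hreach.tail ((hstepB _ _).2 ⟨b, c, rfl, hbc, Or.inl ⟨hc, rfl⟩⟩)⟩
      · exact absurd (hreach.tail ((hstepB _ _).2 ⟨b, c, rfl, hbc, Or.inr ⟨hc, rfl⟩⟩)) hnoerr
  exact ⟨fun s => ⟨fun h => fwd _ h s rfl, fun h => (bwd s h).2⟩, fun s h => (bwd s h).1⟩
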